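/- Let H be a compact Hausdorff topological group, I a directed partially ordered set, (H_i)_{i ∈ I} a family of open subgroups of H with H_j ⊆ H_i whenever i ≤ j, H_∞ = ⋂_{i ∈ I} H_i, and σ : H → ℂ a continuous group homomorphism with finite range. Then: (a) σ(H_∞) = ⋂_{i ∈ I} σ(H_i); (b) there exists i₀ ∈ I such that for all i ≥ i₀ one has σ(H_i) = σ(H_∞) and H_i = (H_i ∩ ker σ) · H_∞, i.e. every element of H_i is a product k·ℓ with k ∈ H_i ∩ ker σ and ℓ ∈ H_∞. -/

import Mathlib

/-- Let `H` be a compact Hausdorff topological group, `I` a directed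
partially ordered set, `(H_i)` a family of open subgroups with `H_j ⊆ H_i` for `i ≤ j`,
`H_∞ = ⋂ H_i`, and `σ : H → ℂ` a continuous homomorphism with finite range.  Then
(a) `σ(H_∞) = ⋂ σ(H_i)`; (b) there is `i₀` such that for `i ≥ i₀`,
`σ(H_i) = σ(H_∞)` and `H_i = (H_i ∩ ker σ) · H_∞`. -/
theorem stmt_16 {H : Type*} [Group H] [TopologicalSpace H] [IsTopologicalGroup H]
    [CompactSpace H] [T2Space H]
    {I : Type*} [PartialOrder I] [Nonempty I] [IsDirected I (· ≤ ·)]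
    (Hi : I → Subgroup H) (hopen : ∀ i, IsOpen ((Hi i : Subgroup H) : Set H))
    (hanti : ∀ i j : I, i ≤ j → Hi j ≤ Hi i)
    (σ : H →* ℂ) (hσc : Continuous σ) (hσf : (Set.range σ).Finite) :
    (σ '' (⋂ i, ((Hi i : Subgroup H) : Set H)) = ⋂ i, σ '' ((Hi i : Subgroup H) : Set H)) ∧
    ∃ i₀ : I, ∀ i : I, i₀ ≤ i →
      (σ '' ((Hi i : Subgroup H) : Set H) = σ '' (⋂ j, ((Hi j : Subgroup H) : Set H))) ∧
      (∀ x ∈ Hi i, ∃ k ∈ Hi i, σ k = 1 ∧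
        ∃ l ∈ ⋂ j, ((Hi j : Subgroup H) : Set H), x = k * l) := by
  classical
  have hfin : ∀ i, (σ '' ((Hi i : Subgroup H) : Set H)).Finite :=
    fun i => hσf.subset (Set.image_subset_range _ _)
  have hclosed : ∀ i, IsClosed ((Hi i : Subgroup H) : Set H) :=
    fun i => Subgroup.isClosed_of_isOpen _ (hopen i)
  -- part (a)
  have ha : σ '' (⋂ i, ((Hi i : Subgroup H) : Set H))
      = ⋂ i, σ '' ((Hi i : Subgroup H) : Set H) := by
    apply Set.Subset.antisymm
    · intro c hc
      rcases hc with ⟨x, hx, rfl⟩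
      exact Set.mem_iInter.2 fun i => ⟨x, Set.mem_iInter.1 hx i, rfl⟩
    · intro c hc
      have hc' := Set.mem_iInter.1 hc
      set t : I → Set H := fun i => ((Hi i : Subgroup H) : Set H) ∩ σ ⁻¹' {c} with ht
      have htd : Directed (· ⊇ ·) t := by
        intro i j
        obtain ⟨k, hik, hjk⟩ := directed_of (· ≤ ·) i j
        exact ⟨k, Set.inter_subset_inter_left _ (hanti i k hik),
          Set.inter_subset_inter_left _ (hanti j k hjk)⟩
      have htn : ∀ i, (t i).Nonempty := by
        intro i
        obtain ⟨x, hx, hxc⟩ := hc' i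
        exact ⟨x, hx, by simpa using hxc⟩
      have htcl : ∀ i, IsClosed (t i) := fun i =>
        (hclosed i).inter (isClosed_singleton.preimage hσc)
      have := IsCompact.nonempty_iInter_of_directed_nonempty_isCompact_isClosed t htd htn
        (fun i => (htcl i).isCompact) htcl
      obtain ⟨x, hx⟩ := this
      have hx' := Set.mem_iInter.1 hx
      refine ⟨x, Set.mem_iInter.2 fun i => (hx' i).1, ?_⟩
      have := (hx' (Classical.arbitrary I)).2
      simpa using this
  refine ⟨ha, ?_⟩
  -- choose i₀ minimizing the cardinality of σ '' H_i
  set f : I → ℕ := fun i => (σ '' ((Hi i : Subgroup H) : Set H)).ncard with hf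
  have hne : (Set.range f).Nonempty := Set.range_nonempty f
  obtain ⟨i₀, hi₀⟩ := Nat.sInf_mem hne
  refine ⟨i₀, fun i hi => ?_⟩
  have hmin : ∀ j, f i₀ ≤ f j := fun j => hi₀ ▸ Nat.sInf_le ⟨j, rfl⟩
  -- for i ≥ i₀, σ '' H_i = σ '' H_{i₀}
  have key : ∀ j, i₀ ≤ j →
      σ '' ((Hi j : Subgroup H) : Set H) = σ '' ((Hi i₀ : Subgroup H) : Set H) := by
    intro j hj
    exact Set.eq_of_subset_of_ncard_le (Set.image_mono (hanti i₀ j hj)) (hmin j) (hfin i₀)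
  -- σ '' H_{i₀} = ⋂ σ '' H_j
  have keyInf : σ '' ((Hi i₀ : Subgroup H) : Set H)
      = ⋂ j, σ '' ((Hi j : Subgroup H) : Set H) := by
    apply Set.Subset.antisymm
    · intro c hc
      refine Set.mem_iInter.2 fun j => ?_
      obtain ⟨k, hik, hjk⟩ := directed_of (· ≤ ·) i₀ j
      have : c ∈ σ '' ((Hi k : Subgroup H) : Set H) := (key k hik).symm ▸ hc
      exact Set.image_mono (f := σ) (hanti j k hjk) this
    · exact Set.iInter_subset _ i₀
  have himg : σ '' ((Hi i : Subgroup H) : Set H)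
      = σ '' (⋂ j, ((Hi j : Subgroup H) : Set H)) := by
    rw [key i hi, keyInf, ha]
  refine ⟨himg, fun x hx => ?_⟩
  have hxi : σ x ∈ σ '' (⋂ j, ((Hi j : Subgroup H) : Set H)) :=
    himg ▸ ⟨x, hx, rfl⟩
  obtain ⟨l, hl, hlσ⟩ := hxi
  have hlHi : l ∈ Hi i := Set.mem_iInter.1 hl i
  refine ⟨x * l⁻¹, (Hi i).mul_mem hx ((Hi i).inv_mem hlHi), ?_, l, hl, by group⟩
  have hlinv : σ l * σ l⁻¹ = 1 := by rw [← map_mul, mul_inv_cancel, map_one]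
  calc σ (x * l⁻¹) = σ x * σ l⁻¹ := map_mul σ _ _
    _ = σ l * σ l⁻¹ := by rw [hlσ]
    _ = 1 := hlinv
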